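/- Let T > 0, C > 0 and y > 0, and let (K_m)_{m≥0} be a sequence of monotone increasing continuous functions from [0,T] to [0,∞) such that K_m(0) = 0 for every m ≥ 0, K_m(t) ≤ K_{m+1}(t) for every m ≥ 0 and t ∈ [0,T], and K_{m+2}(t) ≤ C(K_0(t) + K_{m+1}(t)² + K_m(t)²) + C·K_{m+1}(t)·t^y for every m ≥ 0 and t ∈ (0,T]. Then there exist τ ∈ (0,T] and a constant C' > 0 such that K_m(t) ≤ C'·K_0(t) for every m ≥ 0 and every t ∈ [0,τ]. -/

import Mathlib

open Set Filter

set_option maxHeartbeats 1600000 in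
/-- Two-step iteration bound for the successive-approximation majorants. -/
theorem two_step_iteration_bound
    (T C y : ℝ) (hT : 0 < T) (hC : 0 < C) (hy : 0 < y)
    (K : ℕ → ℝ → ℝ)
    (hmono : ∀ m, MonotoneOn (K m) (Set.Icc 0 T))
    (hcont : ∀ m, ContinuousOn (K m) (Set.Icc 0 T))
    (hnonneg : ∀ m, ∀ t ∈ Set.Icc (0:ℝ) T, 0 ≤ K m t)
    (hK0 : ∀ m, K m 0 = 0)
    (hle : ∀ m, ∀ t ∈ Set.Icc (0:ℝ) T, K m t ≤ K (m + 1) t)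
    (hrec : ∀ m, ∀ t ∈ Set.Ioc (0:ℝ) T,
      K (m + 2) t ≤ C * (K 0 t + (K (m + 1) t) ^ 2 + (K m t) ^ 2) + C * K (m + 1) t * t ^ y) :
    ∃ τ ∈ Set.Ioc (0:ℝ) T, ∃ C' > 0, ∀ m, ∀ t ∈ Set.Icc (0:ℝ) τ,
      K m t ≤ C' * K 0 t := by
  obtain ⟨C', hC'def⟩ : ∃ x : ℝ, x = 2*C + 2 := ⟨_, rfl⟩
  have hC'pos : (0:ℝ) < C' := by rw [hC'def]; linarith
  obtain ⟨d, hddef⟩ : ∃ x : ℝ, x = 4*C + 2*C*C'^2 + C*C' + 1 := ⟨_, rfl⟩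
  have hdpos : (0:ℝ) < d := by
    have : 0 < C*C'^2 := by positivity
    have : 0 < C*C' := by positivity
    rw [hddef]; linarith
  obtain ⟨ε, hεdef⟩ : ∃ x : ℝ, x = 1/d := ⟨_, rfl⟩
  have hεpos : (0:ℝ) < ε := by rw [hεdef]; positivity
  have hεd : ε * d = 1 := by rw [hεdef]; field_simp
  -- continuity of K 1 at 0
  have hc : ContinuousWithinAt (K 1) (Icc 0 T) 0 := hcont 1 0 ⟨le_refl 0, hT.le⟩
  have hmem : (K 1)⁻¹' (Iio ε) ∈ nhdsWithin 0 (Icc 0 T) := by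
    apply hc
    rw [hK0 1]
    exact Iio_mem_nhds hεpos
  rw [Metric.mem_nhdsWithin_iff] at hmem
  obtain ⟨δ, hδpos, hδ⟩ := hmem
  obtain ⟨τ, hτdef⟩ : ∃ x : ℝ, x = min (min (δ/2) T) (ε ^ y⁻¹) := ⟨_, rfl⟩
  have hτpos : 0 < τ := by
    rw [hτdef]
    exact lt_min (lt_min (by linarith) hT) (Real.rpow_pos_of_pos hεpos _)
  have hτT : τ ≤ T := by
    rw [hτdef]; exact (min_le_left _ _).trans (min_le_right _ _)
  refine ⟨τ, ⟨hτpos, hτT⟩, C', hC'pos, ?_⟩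
  have hsub : Icc (0:ℝ) τ ⊆ Icc 0 T := Icc_subset_Icc le_rfl hτT
  have hK1small : ∀ t ∈ Icc (0:ℝ) τ, K 1 t < ε := by
    intro t ht
    apply hδ
    constructor
    · rw [Metric.mem_ball, Real.dist_eq, sub_zero, abs_of_nonneg ht.1]
      have : t ≤ δ/2 := le_trans ht.2 (by rw [hτdef]; exact (min_le_left _ _).trans (min_le_left _ _))
      linarith
    · exact hsub ht
  have hK0small : ∀ t ∈ Icc (0:ℝ) τ, K 0 t < ε := fun t ht =>
    lt_of_le_of_lt (hle 0 t (hsub ht)) (hK1small t ht)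
  have hty : ∀ t ∈ Icc (0:ℝ) τ, t ^ y ≤ ε := by
    intro t ht
    have h1 : t ^ y ≤ (ε ^ y⁻¹) ^ y :=
      Real.rpow_le_rpow ht.1 (ht.2.trans (by rw [hτdef]; exact min_le_right _ _)) hy.le
    rwa [← Real.rpow_mul hεpos.le, inv_mul_cancel₀ hy.ne', Real.rpow_one] at h1
  -- quantitative facts about ε
  have hCε : C * ε ≤ 1/4 := by
    have h1 : 0 ≤ (d - 4*C) * ε := by
      apply mul_nonneg _ hεpos.le
      have h2 : 0 ≤ 2*C*C'^2 := by positivity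
      have h3 : 0 ≤ C*C' := by positivity
      rw [hddef]; linarith
    nlinarith [hεd]
  have hmix : (2*C*C'^2 + C*C') * ε ≤ 1 := by
    have h1 : 0 ≤ (d - (2*C*C'^2 + C*C')) * ε := by
      apply mul_nonneg _ hεpos.le
      rw [hddef]; linarith
    nlinarith [hεd]
  have hCstep : C + 2 ≤ C' := by rw [hC'def]; linarith
  -- main two-step induction
  have key : ∀ m, (∀ t ∈ Icc (0:ℝ) τ, K m t ≤ C' * K 0 t) ∧
      (∀ t ∈ Icc (0:ℝ) τ, K (m+1) t ≤ C' * K 0 t) := by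
    intro m
    induction m with
    | zero =>
      constructor
      · intro t ht
        have h0 := hnonneg 0 t (hsub ht)
        nlinarith
      · intro t ht
        rcases eq_or_lt_of_le ht.1 with h | h
        · rw [← h]; simp [hK0]
        · have hrec0 := hrec 0 t ⟨h, (hsub ht).2⟩
          have h12 := hle 1 t (hsub ht)
          have h01 := hle 0 t (hsub ht)
          have hk1 := (hK1small t ht).le
          have hk0 := (hK0small t ht).le
          have htyt := hty t ht
          have h0n := hnonneg 0 t (hsub ht)
          have h1n := hnonneg 1 t (hsub ht)
          have f1 : K 1 t ^ 2 ≤ ε * K 1 t := by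
            nlinarith [mul_nonneg h1n (sub_nonneg.mpr hk1)]
          have f2 : K 0 t ^ 2 ≤ ε * K 0 t := by
            nlinarith [mul_nonneg h0n (sub_nonneg.mpr hk0)]
          have f3 : K 1 t * t ^ y ≤ ε * K 1 t := by
            have := mul_le_mul_of_nonneg_left htyt h1n
            linarith [this]
          have g1 := mul_le_mul_of_nonneg_left f1 hC.le
          have g2 := mul_le_mul_of_nonneg_left f2 hC.le
          have g3 := mul_le_mul_of_nonneg_left f3 hC.le
          have g4 : C * (ε * K 1 t) ≤ (1/4) * K 1 t := by
            nlinarith [mul_le_mul_of_nonneg_right hCε h1n]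
          have g5 : C * (ε * K 0 t) ≤ (1/4) * K 0 t := by
            nlinarith [mul_le_mul_of_nonneg_right hCε h0n]
          have g6 : 0 ≤ (C' - (2*C + 1/2)) * K 0 t := by
            apply mul_nonneg _ h0n
            rw [hC'def]; linarith
          linarith [hrec0, h12, g1, g2, g3, g4, g5, g6]
    | succ n ih =>
      refine ⟨ih.2, ?_⟩
      intro t ht
      rcases eq_or_lt_of_le ht.1 with h | h
      · rw [← h]; simp [hK0]
      · have hrecn := hrec n t ⟨h, (hsub ht).2⟩
        have hn := ih.1 t ht
        have hn1 := ih.2 t ht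
        have hk0 := (hK0small t ht).le
        have htyt := hty t ht
        have h0n := hnonneg 0 t (hsub ht)
        have hnn := hnonneg n t (hsub ht)
        have hn1n := hnonneg (n+1) t (hsub ht)
        have e0 : (C' * K 0 t)^2 ≤ C'^2 * ε * K 0 t := by
          nlinarith [mul_nonneg (mul_nonneg (sq_nonneg C') h0n) (sub_nonneg.mpr hk0)]
        have e1 : K (n+1) t ^ 2 ≤ C'^2 * ε * K 0 t :=
          le_trans (pow_le_pow_left₀ hn1n hn1 2) e0
        have e2 : K n t ^ 2 ≤ C'^2 * ε * K 0 t :=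
          le_trans (pow_le_pow_left₀ hnn hn 2) e0
        have e3 : K (n+1) t * t ^ y ≤ C' * K 0 t * ε := by
          apply mul_le_mul hn1 htyt (Real.rpow_nonneg ht.1 y)
          positivity
        have g1 := mul_le_mul_of_nonneg_left e1 hC.le
        have g2 := mul_le_mul_of_nonneg_left e2 hC.le
        have g3 := mul_le_mul_of_nonneg_left e3 hC.le
        have g4 : 0 ≤ K 0 t * (1 - (2*C*C'^2 + C*C') * ε) :=
          mul_nonneg h0n (by linarith)
        have g5 : 0 ≤ (C' - (C + 2)) * K 0 t := mul_nonneg (by linarith) h0n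
        linarith [hrecn, g1, g2, g3, g4, g5, h0n]
  intro m t ht
  exact (key m).1 t ht
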